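/- arXiv:2411.15095 — 3 statements merged into one kernel-verified Lean document; each statement's English description precedes it below -/
import Mathlib

section
/- Fix d, b ∈ ℕ and a subset V ⊆ {1, …, d}, and let f : [0,1]^{|V|} → ℝ be an L-Lipschitz function with 0 ≤ f(y) ≤ C for all y, for some constant C ≥ 1. Then there exists a histogram q ∈ 𝒬_{d,b,V,C} such that ‖f ∘ e_V − q‖₁ ≤ √|V| · L / (2b), where ‖·‖₁ is the L¹ norm on [0,1]^d with respect to Lebesgue measure; in particular min_{q ∈ 𝒬_{d,b,V,C}} ‖f ∘ e_V − q‖₁ ≤ √|V| · L / (2b). -/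
open MeasureTheory

/-- The unit cube `[0,1]^d` in `d`-dimensional Euclidean space (with the `L²` norm). -/
def unitCube (d : ℕ) : Set (EuclideanSpace ℝ (Fin d)) :=
  {x | ∀ i, 0 ≤ x i ∧ x i ≤ 1}

/-- The cell `Λ_{d,b,A,V}` of points `x ∈ [0,1]^d` whose coordinates in `V` lie in the
sub-interval of `[0,1]` of width `1/b` indexed by `A`. -/
def histCell (d b : ℕ) (V : Finset (Fin d)) (A : V → Fin b) :
    Set (EuclideanSpace ℝ (Fin d)) :=
  {x ∈ unitCube d | ∀ i : V, (A i : ℝ) / b ≤ x i ∧ x i ≤ ((A i : ℝ) + 1) / b}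

/-- The histogram class `𝒬_{d,b,V,C}`: nonnegative linear combinations (with weights in
`[0, C]`) of indicators of the cells `Λ_{d,b,A,V}`. -/
def histClass (d b : ℕ) (V : Finset (Fin d)) (C : ℝ) :
    Set (EuclideanSpace ℝ (Fin d) → ℝ) :=
  {q | ∃ w : (V → Fin b) → ℝ, (∀ A, w A ∈ Set.Icc (0 : ℝ) C) ∧
    q = fun x => ∑ A : V → Fin b, w A * (histCell d b V A).indicator (fun _ => (1 : ℝ)) x}

/-- The coordinate projection `e_V : [0,1]^d → [0,1]^{|V|}` selecting the coordinates in
`V` in increasing order. -/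
def coordProj (d : ℕ) (V : Finset (Fin d)) (x : EuclideanSpace ℝ (Fin d)) :
    EuclideanSpace ℝ (Fin V.card) :=
  WithLp.toLp 2 (fun i => x (V.orderEmbOfFin rfl i))

/-- The volume of the unit cube is 1. -/
lemma volume_unitCube (d : ℕ) : volume (unitCube d) = 1 := by
  have h := EuclideanSpace.volume_preserving_symm_measurableEquiv_toLp (ι := Fin d)
  have heq : unitCube d =
      (MeasurableEquiv.toLp 2 (Fin d → ℝ)).symm ⁻¹' (Set.univ.pi fun _ => Set.Icc (0:ℝ) 1) := by
    ext x
    simp [unitCube, Set.mem_univ_pi, Set.mem_Icc, Pi.le_def, forall_and]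
  rw [heq, h.measure_preimage
    ((MeasurableSet.univ_pi fun _ => measurableSet_Icc).nullMeasurableSet)]
  rw [volume_pi, Measure.pi_pi]
  simp

/-- Coordinate hyperplanes in Euclidean space have measure zero. -/
lemma volume_hyperplane (d : ℕ) (v : Fin d) (r : ℝ) :
    volume {x : EuclideanSpace ℝ (Fin d) | x v = r} = 0 := by
  have h := EuclideanSpace.volume_preserving_symm_measurableEquiv_toLp (ι := Fin d)
  have heq : {x : EuclideanSpace ℝ (Fin d) | x v = r} =
      (MeasurableEquiv.toLp 2 (Fin d → ℝ)).symm ⁻¹' (Function.eval v ⁻¹' {r}) := by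
    ext x
    simp [Function.eval]
  rw [heq, h.measure_preimage
    (((measurable_pi_apply v) (measurableSet_singleton r)).nullMeasurableSet)]
  rw [volume_pi]
  exact Measure.pi_eval_preimage_null (μ := fun _ => volume) (measure_singleton r)

/-- If `f : [0,1]^{|V|} → ℝ` is `L`-Lipschitz with `0 ≤ f ≤ C` on the unit cube (`C ≥ 1`),
then some histogram `q ∈ 𝒬_{d,b,V,C}` satisfies `‖f ∘ e_V − q‖₁ ≤ √|V| · L / (2b)`,
the `L¹` norm being over `[0,1]^d` with Lebesgue measure. -/
theorem histClass_approximates_lipschitz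
    (d b : ℕ) (hb : 0 < b) (V : Finset (Fin d))
    (f : EuclideanSpace ℝ (Fin V.card) → ℝ) (L : NNReal)
    (hlip : LipschitzOnWith L f (unitCube V.card))
    (C : ℝ) (hC : 1 ≤ C)
    (hrange : ∀ y ∈ unitCube V.card, 0 ≤ f y ∧ f y ≤ C) :
    ∃ q ∈ histClass d b V C,
      ∫ x in unitCube d, |f (coordProj d V x) - q x| ≤
        Real.sqrt V.card * L / (2 * b) := by
  classical
  have hbR : (0:ℝ) < b := by exact_mod_cast hb
  set c : ℝ := Real.sqrt V.card * L / (2 * b) with hc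
  have hc0 : 0 ≤ c := by positivity
  -- centers of cells
  set center : (V → Fin b) → EuclideanSpace ℝ (Fin V.card) :=
    fun A => WithLp.toLp 2 (fun i => ((A ⟨V.orderEmbOfFin rfl i, V.orderEmbOfFin_mem rfl i⟩ : ℝ) + 1/2) / b)
    with hcenter
  have hcenter_mem : ∀ A, center A ∈ unitCube V.card := by
    intro A i
    set a : ℝ := (A ⟨V.orderEmbOfFin rfl i, V.orderEmbOfFin_mem rfl i⟩ : ℝ) with ha
    have ha0 : 0 ≤ a := Nat.cast_nonneg _
    have ha1 : a + 1 ≤ b := by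
      have := (A ⟨V.orderEmbOfFin rfl i, V.orderEmbOfFin_mem rfl i⟩).2
      have : ((A ⟨V.orderEmbOfFin rfl i, V.orderEmbOfFin_mem rfl i⟩ : ℕ) : ℝ) + 1 ≤ b := by
        exact_mod_cast this
      simpa [ha] using this
    constructor
    · show 0 ≤ (a + 1/2) / b
      positivity
    · show (a + 1/2) / b ≤ 1
      rw [div_le_one hbR]; linarith
  set w : (V → Fin b) → ℝ := fun A => f (center A) with hw
  set q : EuclideanSpace ℝ (Fin d) → ℝ :=
    fun x => ∑ A : V → Fin b, w A * (histCell d b V A).indicator (fun _ => (1:ℝ)) x with hq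
  refine ⟨q, ⟨w, fun A => Set.mem_Icc.2 ⟨(hrange _ (hcenter_mem A)).1,
    (hrange _ (hcenter_mem A)).2⟩, rfl⟩, ?_⟩
  by_cases hint : IntegrableOn (fun x => |f (coordProj d V x) - q x|) (unitCube d)
  swap
  · rw [integral_undef hint]; exact hc0
  -- basic measure facts
  have hcube_meas : MeasurableSet (unitCube d) := by
    have : unitCube d = ⋂ i, (fun x : EuclideanSpace ℝ (Fin d) => x i) ⁻¹' Set.Icc 0 1 := by
      ext x; simp [unitCube, Set.mem_Icc]
    rw [this]
    exact MeasurableSet.iInter fun i => ((measurable_pi_apply i).comp (MeasurableEquiv.toLp 2 (Fin d → ℝ)).symm.measurable) measurableSet_Icc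
  have hvol : volume (unitCube d) = 1 := volume_unitCube d
  -- the null set of grid points
  set N : Set (EuclideanSpace ℝ (Fin d)) :=
    ⋃ (v : Fin d), ⋃ (k : Fin (b+1)), {x | x v = (k : ℝ) / b} with hNdef
  have hN : volume N = 0 :=
    measure_iUnion_null fun v => measure_iUnion_null fun k => volume_hyperplane d v _
  -- pointwise bound off the null set
  have hbound : ∀ x ∈ unitCube d, x ∉ N → |f (coordProj d V x) - q x| ≤ c := by
    intro x hx hxN
    have hgrid : ∀ (v : Fin d) (k : ℕ), k ≤ b → x v ≠ (k : ℝ) / b := by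
      intro v k hk hcontra
      exact hxN (Set.mem_iUnion.2 ⟨v, Set.mem_iUnion.2 ⟨⟨k, Nat.lt_succ_of_le hk⟩,
        by simpa using hcontra⟩⟩)
    have hne : ∀ (v : Fin d) (m : ℤ), 0 ≤ m → m ≤ b → (b : ℝ) * x v ≠ m := by
      intro v m hm0 hmb hcontra
      refine hgrid v m.toNat (by omega) ?_
      have h' : (m.toNat : ℤ) = m := Int.toNat_of_nonneg hm0
      have : ((m.toNat : ℕ) : ℝ) = (m : ℝ) := by exact_mod_cast congrArg ((Int.cast : ℤ → ℝ)) h'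
      rw [this, eq_div_iff hbR.ne']
      linarith [hcontra]
    have hstrict : ∀ v : Fin d, 0 < (b:ℝ) * x v ∧ (b:ℝ) * x v < b := by
      intro v
      have h0 : 0 ≤ x v := (hx v).1
      have h1 : x v ≤ 1 := (hx v).2
      constructor
      · rcases lt_or_eq_of_le (by positivity : (0:ℝ) ≤ (b:ℝ) * x v) with h | h
        · exact h
        · exact absurd h.symm (by simpa using hne v 0 le_rfl (by exact_mod_cast hb.le))
      · rcases lt_or_eq_of_le (by nlinarith : (b:ℝ) * x v ≤ b) with h | h
        · exact h
        · exact absurd (by exact_mod_cast h : (b:ℝ) * x v = ((b : ℤ) : ℝ))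
            (hne v b (by positivity) le_rfl)
    have hnint : ∀ v : Fin d, ∀ m : ℤ, (b : ℝ) * x v ≠ m := by
      intro v m hcontra
      have h1 := (hstrict v).1
      have h2 := (hstrict v).2
      have hm0 : 0 ≤ m := by
        have : (0:ℝ) < (m:ℝ) := hcontra ▸ h1
        exact_mod_cast this.le
      have hmb : m ≤ b := by
        have : (m:ℝ) < b := hcontra ▸ h2
        exact_mod_cast this.le
      exact hne v m hm0 hmb hcontra
    -- the unique cell containing x
    have hfloor_lt : ∀ v : Fin d, (⌊(b:ℝ) * x v⌋).toNat < b := by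
      intro v
      have h2 : ⌊(b:ℝ) * x v⌋ < (b:ℤ) := Int.floor_lt.2 (by exact_mod_cast (hstrict v).2)
      omega
    set A₀ : V → Fin b := fun i => ⟨(⌊(b:ℝ) * x i⌋).toNat, hfloor_lt i⟩ with hA₀
    have hfloor_nonneg : ∀ v : Fin d, 0 ≤ ⌊(b:ℝ) * x v⌋ := fun v =>
      Int.floor_nonneg.2 (hstrict v).1.le
    have hA₀cast : ∀ i : V, (A₀ i : ℝ) = (⌊(b:ℝ) * x i⌋ : ℝ) := by
      intro i
      have h' : ((⌊(b:ℝ) * x i⌋).toNat : ℤ) = ⌊(b:ℝ) * x i⌋ := Int.toNat_of_nonneg (hfloor_nonneg i)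
      show (((⌊(b:ℝ) * x i⌋).toNat : ℕ) : ℝ) = _
      exact_mod_cast congrArg ((Int.cast : ℤ → ℝ)) h'
    have hmem : x ∈ histCell d b V A₀ := by
      refine ⟨hx, fun i => ?_⟩
      rw [hA₀cast i]
      constructor
      · rw [div_le_iff₀ hbR, mul_comm]
        exact Int.floor_le _
      · rw [le_div_iff₀ hbR, mul_comm]
        have h := (Int.lt_floor_add_one ((b:ℝ) * x i)).le
        push_cast at h ⊢
        linarith
    have huniq : ∀ A : V → Fin b, x ∈ histCell d b V A → A = A₀ := by
      intro A hA
      funext i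
      have h1 := (hA.2 i).1
      have h2 := (hA.2 i).2
      rw [div_le_iff₀ hbR] at h1
      rw [le_div_iff₀ hbR] at h2
      -- (A i : ℝ) ≤ b * x i ≤ A i + 1, strictly since not integer
      have hl : ((A i : ℕ) : ℤ) ≤ ⌊(b:ℝ) * x i⌋ := by
        apply Int.le_floor.2
        push_cast
        linarith [mul_comm (x i : ℝ) (b:ℝ)]
      have hr : ⌊(b:ℝ) * x i⌋ < ((A i : ℕ) : ℤ) + 1 := by
        apply Int.floor_lt.2
        rcases lt_or_eq_of_le (by push_cast; linarith [mul_comm (x i : ℝ) (b:ℝ)] :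
          (b:ℝ) * x i ≤ ((A i : ℕ) : ℝ) + 1) with h | h
        · exact_mod_cast h
        · exact absurd (by exact_mod_cast h) (hnint i ((A i : ℕ) + 1))
      have : ((A i : ℕ) : ℤ) = ⌊(b:ℝ) * x i⌋ := by omega
      apply Fin.ext
      show (A i : ℕ) = (⌊(b:ℝ) * x i⌋).toNat
      omega
    have hqx : q x = w A₀ := by
      rw [hq]
      simp only
      rw [Finset.sum_eq_single A₀]
      · rw [Set.indicator_of_mem hmem]; ring
      · intro A _ hAne
        rw [Set.indicator_of_notMem (fun h => hAne (huniq A h))]; ring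
      · intro h; exact absurd (Finset.mem_univ A₀) h
    have hproj : coordProj d V x ∈ unitCube V.card := fun i => hx _
    have hdist : dist (coordProj d V x) (center A₀) ≤ Real.sqrt V.card / (2*b) := by
      rw [EuclideanSpace.dist_eq]
      have hcoord : ∀ i : Fin V.card,
          dist (coordProj d V x i) (center A₀ i) ^ 2 ≤ (1/(2*b))^2 := by
        intro i
        have hsq : dist (coordProj d V x i) (center A₀ i) ≤ 1/(2*b) := by
          set j : V := ⟨V.orderEmbOfFin rfl i, V.orderEmbOfFin_mem rfl i⟩ with hj
          have h1 := (hmem.2 j).1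
          have h2 := (hmem.2 j).2
          rw [div_le_iff₀ hbR] at h1
          rw [le_div_iff₀ hbR] at h2
          have hxv : coordProj d V x i = x j := rfl
          have hcv : center A₀ i = ((A₀ j : ℝ) + 1/2)/b := rfl
          rw [hxv, hcv, Real.dist_eq]
          have heq2 : x (j : Fin d) - ((A₀ j : ℝ) + 1/2)/b
              = ((b:ℝ) * x (j : Fin d) - ((A₀ j : ℝ) + 1/2))/b := by
            field_simp
          rw [heq2, abs_div, abs_of_pos hbR, ← div_div 1 2 (b:ℝ)]
          gcongr
          rw [abs_le]
          constructor <;> nlinarith [mul_comm (x (j : Fin d)) (b:ℝ)]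
        have hd0 : 0 ≤ dist (coordProj d V x i) (center A₀ i) := dist_nonneg
        exact pow_le_pow_left₀ hd0 hsq 2
      calc Real.sqrt (∑ i, dist (coordProj d V x i) (center A₀ i) ^ 2)
          ≤ Real.sqrt (∑ _i : Fin V.card, (1/(2*b))^2) :=
            Real.sqrt_le_sqrt (Finset.sum_le_sum fun i _ => hcoord i)
        _ = Real.sqrt V.card / (2*b) := by
            rw [Finset.sum_const, Finset.card_univ, Fintype.card_fin, nsmul_eq_mul,
              Real.sqrt_mul (Nat.cast_nonneg _), Real.sqrt_sq (by positivity)]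
            ring
    rw [hqx]
    have hL := hlip.dist_le_mul _ hproj _ (hcenter_mem A₀)
    calc |f (coordProj d V x) - w A₀|
        = dist (f (coordProj d V x)) (f (center A₀)) := (Real.dist_eq _ _).symm
      _ ≤ L * dist (coordProj d V x) (center A₀) := hL
      _ ≤ L * (Real.sqrt V.card / (2*b)) := by
          exact mul_le_mul_of_nonneg_left hdist L.coe_nonneg
      _ = c := by rw [hc]; ring
  -- conclude by integrating the pointwise bound
  have hae : ∀ᵐ x ∂(volume.restrict (unitCube d)),
      |f (coordProj d V x) - q x| ≤ c := by
    have h1 : ∀ᵐ x ∂(volume.restrict (unitCube d)), x ∈ unitCube d :=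
      ae_restrict_mem hcube_meas
    have h2 : ∀ᵐ x ∂(volume : Measure (EuclideanSpace ℝ (Fin d))), x ∉ N :=
      measure_eq_zero_iff_ae_notMem.1 hN
    filter_upwards [h1, ae_restrict_of_ae h2] with x hx hxN
    exact hbound x hx hxN
  calc ∫ x in unitCube d, |f (coordProj d V x) - q x|
      ≤ ∫ _x in unitCube d, c := by
        refine integral_mono_ae hint ?_ hae
        exact (integrableOn_const (by rw [hvol]; exact ENNReal.one_ne_top))
    _ = c := by rw [setIntegral_const]; simp [Measure.real, hvol]
end

section
/- Fix d, d', t ∈ ℕ with t < d and t < d'. The clique number of the t-th power grid graph L_{d×d'}^t is at most (t² + 4t + 3)/2; more precisely it is at most (t+1)·⌈(t+1)/2⌉. -/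
/-- The `t`-th power `L_{d×d'}^t` of the grid graph: vertices are `{1,…,d} × {1,…,d'}` and
distinct vertices are adjacent iff their Manhattan distance is at most `t`. -/
def gridPowGraph (d d' t : ℕ) : SimpleGraph (Fin d × Fin d') where
  Adj a b := a ≠ b ∧
    ((a.1 : ℤ) - b.1).natAbs + ((a.2 : ℤ) - b.2).natAbs ≤ t
  symm := ⟨by
    rintro a b ⟨hne, hd⟩
    exact ⟨hne.symm, by omega⟩⟩
  loopless := ⟨by rintro a ⟨hne, -⟩; exact hne rfl⟩

lemma aux_parity (t : ℕ) (a u : ℤ) :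
    ((Finset.Icc a (a + t)).filter (fun v => (u + v) % 2 = 0)).card ≤ (t + 2) / 2 := by
  have h : ((Finset.Icc a (a + t)).filter (fun v => (u + v) % 2 = 0)).card
      ≤ (Finset.range ((t + 2) / 2)).card := by
    apply Finset.card_le_card_of_injOn (fun v => ((v - a) / 2).toNat)
    · intro v hv
      simp only [Finset.mem_coe, Finset.mem_filter, Finset.mem_Icc] at hv
      simp only [Finset.mem_coe, Finset.mem_range]
      omega
    · intro v hv w hw hvw
      simp only [Finset.coe_filter, Finset.mem_Icc, Set.mem_setOf_eq] at hv hw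
      have hvw' : ((v - a) / 2).toNat = ((w - a) / 2).toNat := hvw
      omega
  simpa using h

lemma clique_card_le (d d' t : ℕ) (s : Finset (Fin d × Fin d'))
    (hc : (gridPowGraph d d' t).IsClique s) :
    s.card ≤ (t + 1) * ((t + 2) / 2) := by
  classical
  set f : Fin d × Fin d' → ℤ × ℤ := fun p => ((p.1 : ℤ) + p.2, (p.1 : ℤ) - p.2) with hf
  have hinj : Set.InjOn f s := by
    intro p _ q _ h
    simp only [hf, Prod.mk.injEq] at h
    have h1 : (p.1 : ℤ) = q.1 := by omega
    have h2 : (p.2 : ℤ) = q.2 := by omega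
    exact Prod.ext (Fin.ext (by exact_mod_cast h1)) (Fin.ext (by exact_mod_cast h2))
  rw [← Finset.card_image_of_injOn hinj]
  set T := s.image f with hT
  rcases T.eq_empty_or_nonempty with h | hne
  · simp [h]
  have key : ∀ p ∈ T, ∀ q ∈ T, |p.1 - q.1| ≤ (t : ℤ) ∧ |p.2 - q.2| ≤ (t : ℤ) := by
    intro p hp q hq
    rw [hT, Finset.mem_image] at hp hq
    obtain ⟨a, ha, rfl⟩ := hp
    obtain ⟨b, hb, rfl⟩ := hq
    rcases eq_or_ne a b with rfl | hab
    · simp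
    · have := hc ha hb hab
      obtain ⟨-, hd⟩ := this
      simp only [hf]
      constructor <;> simp only [abs_le] <;> omega
  have parity : ∀ p ∈ T, (p.1 + p.2) % 2 = 0 := by
    intro p hp
    rw [hT, Finset.mem_image] at hp
    obtain ⟨a, ha, rfl⟩ := hp
    simp only [hf]
    omega
  have hne1 : (T.image Prod.fst).Nonempty := hne.image _
  have hne2 : (T.image Prod.snd).Nonempty := hne.image _
  set u0 := (T.image Prod.fst).min' hne1 with hu0
  set v0 := (T.image Prod.snd).min' hne2 with hv0
  obtain ⟨pu, hpu, hpu1⟩ := Finset.mem_image.mp ((T.image Prod.fst).min'_mem hne1)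
  obtain ⟨pv, hpv, hpv1⟩ := Finset.mem_image.mp ((T.image Prod.snd).min'_mem hne2)
  have hsub : T ⊆ (Finset.Icc u0 (u0 + t)).biUnion
      (fun u => ((Finset.Icc v0 (v0 + t)).filter (fun v => (u + v) % 2 = 0)).image
        (fun v => (u, v))) := by
    intro p hp
    have h1 : u0 ≤ p.1 := Finset.min'_le _ _ (Finset.mem_image_of_mem _ hp)
    have h2 : v0 ≤ p.2 := Finset.min'_le _ _ (Finset.mem_image_of_mem _ hp)
    have h3 : |p.1 - pu.1| ≤ (t : ℤ) := (key p hp pu hpu).1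
    have h4 : |p.2 - pv.2| ≤ (t : ℤ) := (key p hp pv hpv).2
    have hpar := parity p hp
    rw [Finset.mem_biUnion]
    refine ⟨p.1, Finset.mem_Icc.mpr ⟨h1, ?_⟩, ?_⟩
    · rw [abs_le] at h3; omega
    · rw [Finset.mem_image]
      refine ⟨p.2, Finset.mem_filter.mpr ⟨Finset.mem_Icc.mpr ⟨h2, ?_⟩, hpar⟩, rfl⟩
      rw [abs_le] at h4; omega
  calc T.card ≤ _ := Finset.card_le_card hsub
    _ ≤ ∑ u ∈ Finset.Icc u0 (u0 + t),
        (((Finset.Icc v0 (v0 + t)).filter (fun v => (u + v) % 2 = 0)).image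
          (fun v => (u, v))).card := Finset.card_biUnion_le
    _ ≤ ∑ u ∈ Finset.Icc u0 (u0 + t), ((t + 2) / 2) := by
        apply Finset.sum_le_sum
        intro u _
        exact (Finset.card_image_le).trans (aux_parity t v0 u)
    _ = (Finset.Icc u0 (u0 + (t : ℤ))).card * ((t + 2) / 2) := by
        rw [Finset.sum_const, smul_eq_mul]
    _ = (t + 1) * ((t + 2) / 2) := by
        rw [Int.card_Icc]
        congr 1
        omega

/-- The clique number of `L_{d×d'}^t` (with `t < d`, `t < d'`) is at most
`(t+1)·⌈(t+1)/2⌉`, and in particular at most `(t² + 4t + 3)/2`. -/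
theorem gridPowGraph_cliqueNum_le
    (d d' t : ℕ) (htd : t < d) (htd' : t < d') :
    (gridPowGraph d d' t).cliqueNum ≤ (t + 1) * ((t + 2) / 2) ∧
      ((gridPowGraph d d' t).cliqueNum : ℝ) ≤ ((t : ℝ) ^ 2 + 4 * t + 3) / 2 := by
  have hb : (gridPowGraph d d' t).cliqueNum ≤ (t + 1) * ((t + 2) / 2) := by
    apply csSup_le'
    rintro n ⟨s, hs⟩
    rw [← hs.2]
    exact clique_card_le d d' t s hs.1
  refine ⟨hb, ?_⟩
  have h2 : ((t + 1) * ((t + 2) / 2)) * 2 ≤ t ^ 2 + 4 * t + 3 := by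
    have h := Nat.div_mul_le_self (t + 2) 2
    nlinarith
  have h3 : (((t + 1) * ((t + 2) / 2) : ℕ) : ℝ) * 2 ≤ (t : ℝ) ^ 2 + 4 * t + 3 := by
    exact_mod_cast h2
  have h4 : ((gridPowGraph d d' t).cliqueNum : ℝ) ≤ (((t + 1) * ((t + 2) / 2) : ℕ) : ℝ) := by
    exact_mod_cast hb
  linarith
end

section
/- Let ℱ be a nonempty set of bounded measurable functions from [0,1]^d to ℝ, let p be a probability density on [0,1]^d with ‖p‖₂ < ∞, and let x₁, …, x_n ∈ [0,1]^d. Suppose p̂ ∈ ℱ minimizes f ↦ ‖f‖₂² − (2/n)Σ_{i=1}^n f(x_i) over ℱ, and p* ∈ ℱ minimizes f ↦ ‖f − p‖₂² over ℱ. Then ‖p̂ − p‖₂² ≤ 4·sup_{f ∈ ℱ} |∫_{[0,1]^d} f(x)p(x) dx − (1/n)Σ_{i=1}^n f(x_i)| + ‖p* − p‖₂². -/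
open MeasureTheory

lemma isCompact_unitCube (d : ℕ) : IsCompact (unitCube d) := by
  have h : unitCube d =
      (EuclideanSpace.equiv (Fin d) ℝ).symm '' (Set.univ.pi fun _ => Set.Icc (0:ℝ) 1) := by
    ext y
    constructor
    · intro hy
      exact ⟨EuclideanSpace.equiv (Fin d) ℝ y, fun i _ => hy i, rfl⟩
    · rintro ⟨z, hz, rfl⟩ i
      exact hz i (Set.mem_univ i)
  rw [h]
  exact (isCompact_univ_pi fun _ => isCompact_Icc).image
    (EuclideanSpace.equiv (Fin d) ℝ).symm.continuous

lemma measurableSet_unitCube (d : ℕ) : MeasurableSet (unitCube d) :=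
  (isCompact_unitCube d).isClosed.measurableSet

/-- Oracle inequality for the `L²`-minimizing estimator: if `phat ∈ ℱ` minimizes
`f ↦ ‖f‖₂² − (2/n)·∑ᵢ f(xᵢ)` over `ℱ` and `pstar ∈ ℱ` minimizes `f ↦ ‖f − p‖₂²` over
`ℱ`, then `‖phat − p‖₂² ≤ 4·sup_{f ∈ ℱ} |∫ f·p − (1/n)∑ᵢ f(xᵢ)| + ‖pstar − p‖₂²`
(formulated via an arbitrary upper bound `B` for the supremum). -/
theorem l2_estimator_oracle_inequality
    (d n : ℕ) (hn : 0 < n)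
    (ℱ : Set (EuclideanSpace ℝ (Fin d) → ℝ)) (hne : ℱ.Nonempty)
    (hmeas : ∀ f ∈ ℱ, Measurable f)
    (hbdd : ∀ f ∈ ℱ, ∃ M : ℝ, ∀ x, |f x| ≤ M)
    (p : EuclideanSpace ℝ (Fin d) → ℝ)
    (hpmeas : Measurable p)
    (hpnonneg : ∀ x ∈ unitCube d, 0 ≤ p x)
    (hpint : ∫ x in unitCube d, p x = 1)
    (hp2 : IntegrableOn (fun x => p x ^ 2) (unitCube d))
    (x : Fin n → EuclideanSpace ℝ (Fin d)) (hx : ∀ i, x i ∈ unitCube d)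
    (phat : EuclideanSpace ℝ (Fin d) → ℝ) (hphat : phat ∈ ℱ)
    (hphatmin : ∀ f ∈ ℱ,
      (∫ y in unitCube d, phat y ^ 2) - (2 / n) * ∑ i, phat (x i) ≤
        (∫ y in unitCube d, f y ^ 2) - (2 / n) * ∑ i, f (x i))
    (pstar : EuclideanSpace ℝ (Fin d) → ℝ) (hpstar : pstar ∈ ℱ)
    (hpstarmin : ∀ f ∈ ℱ,
      (∫ y in unitCube d, (pstar y - p y) ^ 2) ≤ ∫ y in unitCube d, (f y - p y) ^ 2) :
    ∀ B : ℝ,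
      (∀ f ∈ ℱ,
        |(∫ y in unitCube d, f y * p y) - (1 / n) * ∑ i, f (x i)| ≤ B) →
      (∫ y in unitCube d, (phat y - p y) ^ 2) ≤
        4 * B + ∫ y in unitCube d, (pstar y - p y) ^ 2 := by
  intro B hB
  set S := unitCube d with hSdef
  have hS : MeasurableSet S := measurableSet_unitCube d
  have hSfin : volume S ≠ ⊤ := (isCompact_unitCube d).measure_lt_top.ne
  -- p is integrable on S
  have hpInt : IntegrableOn p S := by
    have hbound : Integrable (fun y => (p y ^ 2 + 1) / 2) (volume.restrict S) := by
      exact ((hp2.add (integrableOn_const hSfin)).div_const 2)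
    refine Integrable.mono' hbound (hpmeas.aestronglyMeasurable.restrict) ?_
    filter_upwards with y
    have : (|p y| - 1)^2 ≥ 0 := sq_nonneg _
    rw [Real.norm_eq_abs]
    nlinarith [sq_abs (p y)]
  -- expansion lemma
  have key : ∀ f ∈ ℱ, (∫ y in S, (f y - p y) ^ 2) =
      (∫ y in S, f y ^ 2) - 2 * (∫ y in S, f y * p y) + ∫ y in S, p y ^ 2 := by
    intro f hf
    obtain ⟨M, hM⟩ := hbdd f hf
    have hfmeas := hmeas f hf
    have hf2 : IntegrableOn (fun y => f y ^ 2) S := by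
      refine Measure.integrableOn_of_bounded (M := M^2) hSfin
        ((hfmeas.pow_const 2).aestronglyMeasurable) ?_
      filter_upwards with y
      rw [Real.norm_eq_abs, abs_pow]
      have h1 := hM y
      have h2 := abs_nonneg (f y)
      nlinarith
    have hfp : IntegrableOn (fun y => f y * p y) S := by
      refine Integrable.mono' ((hpInt.abs).const_mul M)
        ((hfmeas.mul hpmeas).aestronglyMeasurable.restrict) ?_
      filter_upwards with y
      rw [Real.norm_eq_abs, abs_mul]
      exact mul_le_mul_of_nonneg_right (hM y) (abs_nonneg _)
    have heq : ∀ y, (f y - p y) ^ 2 = f y ^ 2 - 2 * (f y * p y) + p y ^ 2 := by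
      intro y; ring
    calc (∫ y in S, (f y - p y) ^ 2)
        = ∫ y in S, (f y ^ 2 - 2 * (f y * p y) + p y ^ 2) := by
          exact integral_congr_ae (Filter.Eventually.of_forall fun y => heq y)
      _ = (∫ y in S, f y ^ 2) - 2 * (∫ y in S, f y * p y) + ∫ y in S, p y ^ 2 := by
          have hsub : Integrable (fun y => f y ^ 2 - 2 * (f y * p y)) (volume.restrict S) :=
            hf2.sub (hfp.const_mul 2)
          rw [integral_add hsub hp2, integral_sub hf2 (hfp.const_mul 2), MeasureTheory.integral_const_mul]
  have hkey_phat := key phat hphat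
  have hkey_pstar := key pstar hpstar
  have hmin := hphatmin pstar hpstar
  have hBphat := hB phat hphat
  have hBpstar := hB pstar hpstar
  rw [abs_le] at hBphat hBpstar
  have h2n : (2 : ℝ) / n = 2 * (1 / n) := by ring
  rw [h2n] at hmin
  nlinarith [hBphat.1, hBphat.2, hBpstar.1, hBpstar.2]
end
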